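/- For pairwise distinct α₁,...,α_m ∈ ℂ, the function g_m(x) = ∑_{j=1}^m e^{α_j x}/∏_{k≠j}(α_j − α_k) admits the power series expansion g_m(x) = ∑_{n ≥ m−1} h_{n−m+1}(α₁,...,α_m) x^n / n!, where h_d denotes the complete homogeneous symmetric polynomial of degree d. In particular g_m vanishes to order m−1 at x = 0. -/

import Mathlib

open Finset

/-- The complete homogeneous symmetric polynomial `h_d(α₁,…,α_m)` evaluated at `α`. -/
noncomputable def completeHomog (m d : ℕ) (α : Fin m → ℂ) : ℂ :=
  ∑ k ∈ (Fintype.piFinset fun _ : Fin m => Finset.range (d + 1)).filter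
      (fun k => ∑ i, k i = d),
    ∏ i, α i ^ k i

/-! ### Auxiliary definitions and lemmas -/

/-- The denominator `∏_{k≠j} (α_j - α_k)`. -/
noncomputable def cdenom {m : ℕ} (α : Fin m → ℂ) (j : Fin m) : ℂ :=
  ∏ k ∈ (Finset.univ : Finset (Fin m)).erase j, (α j - α k)

/-- The power sum `∑_j α_j^n / ∏_{k≠j}(α_j - α_k)`. -/
noncomputable def Ssum {m : ℕ} (α : Fin m → ℂ) (n : ℕ) : ℂ :=
  ∑ j, α j ^ n / cdenom α j

lemma mem_homogFinset {m d : ℕ} (k : Fin m → ℕ) :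
    k ∈ (Fintype.piFinset fun _ : Fin m => Finset.range (d + 1)).filter
      (fun k => ∑ i, k i = d) ↔ ∑ i, k i = d := by
  simp only [Finset.mem_filter, Fintype.mem_piFinset, Finset.mem_range, and_iff_right_iff_imp]
  intro h i
  have : k i ≤ ∑ i, k i := Finset.single_le_sum (fun _ _ => Nat.zero_le _) (Finset.mem_univ i)
  omega

lemma completeHomog_zero (m : ℕ) (α : Fin m → ℂ) : completeHomog m 0 α = 1 := by
  have h : (Fintype.piFinset fun _ : Fin m => Finset.range (0 + 1)).filter
      (fun k => ∑ i, k i = 0) = {fun _ => 0} := by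
    ext k
    simp [mem_homogFinset, Finset.sum_eq_zero_iff, funext_iff]
  rw [completeHomog, h, Finset.sum_singleton]
  exact Finset.prod_eq_one fun _ _ => pow_zero _

lemma completeHomog_zero_vars (d : ℕ) (α : Fin 0 → ℂ) :
    completeHomog 0 (d + 1) α = 0 := by
  rw [completeHomog]
  rw [show (Fintype.piFinset fun _ : Fin 0 => Finset.range (d + 1 + 1)).filter
      (fun k => ∑ i, k i = d + 1) = ∅ by ext k; simp [mem_homogFinset]]
  exact Finset.sum_empty

lemma completeHomog_rec (m d : ℕ) (α : Fin (m + 1) → ℂ) :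
    completeHomog (m + 1) (d + 1) α =
      α 0 * completeHomog (m + 1) d α + completeHomog m (d + 1) (fun i => α i.succ) := by
  classical
  rw [completeHomog,
    ← Finset.sum_filter_add_sum_filter_not _ (fun k : Fin (m + 1) → ℕ => k 0 = 0), add_comm]
  congr 1
  · -- k 0 ≠ 0 part
    rw [completeHomog, Finset.mul_sum]
    refine Finset.sum_nbij' (i := fun k => Function.update k 0 (k 0 - 1))
      (j := fun k => Function.update k 0 (k 0 + 1)) ?_ ?_ ?_ ?_ ?_
    · intro k hk
      rw [Finset.mem_filter, mem_homogFinset] at hk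
      obtain ⟨hk1, hk2⟩ := hk
      refine (mem_homogFinset _).mpr ?_
      rw [Finset.sum_update_of_mem (Finset.mem_univ 0), Finset.sdiff_singleton_eq_erase]
      rw [← Finset.add_sum_erase _ _ (Finset.mem_univ 0)] at hk1
      omega
    · intro k hk
      rw [mem_homogFinset] at hk
      rw [Finset.mem_filter]
      constructor
      · refine (mem_homogFinset _).mpr ?_
        rw [Finset.sum_update_of_mem (Finset.mem_univ 0), Finset.sdiff_singleton_eq_erase]
        rw [← Finset.add_sum_erase _ _ (Finset.mem_univ 0)] at hk
        omega
      · simp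
    · intro k hk
      rw [Finset.mem_filter, mem_homogFinset] at hk
      funext i
      rcases eq_or_ne i 0 with rfl | hi
      · simp only [Function.update_self]
        omega
      · simp [Function.update_of_ne hi]
    · intro k hk
      funext i
      rcases eq_or_ne i 0 with rfl | hi
      · simp only [Function.update_self]
        omega
      · simp [Function.update_of_ne hi]
    · intro k hk
      rw [Finset.mem_filter, mem_homogFinset] at hk
      obtain ⟨hk1, hk2⟩ := hk
      show ∏ i, α i ^ k i = α 0 * ∏ i, α i ^ (Function.update k 0 (k 0 - 1)) i
      rw [← Finset.mul_prod_erase _ (fun i => α i ^ k i) (Finset.mem_univ 0),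
        ← Finset.mul_prod_erase _ (fun i => α i ^ (Function.update k 0 (k 0 - 1)) i)
          (Finset.mem_univ 0), ← mul_assoc]
      have h1 : ∀ i ∈ Finset.univ.erase (0 : Fin (m + 1)),
          α i ^ (Function.update k 0 (k 0 - 1)) i = α i ^ k i := by
        intro i hi
        rw [Function.update_of_ne (Finset.mem_erase.mp hi).1]
      rw [Finset.prod_congr rfl h1]
      congr 1
      rw [Function.update_self]
      have h0 : k 0 = (k 0 - 1) + 1 := by omega
      conv_lhs => rw [h0]
      rw [pow_succ]
      ring
  · -- k 0 = 0 part
    rw [completeHomog]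
    refine Finset.sum_nbij' (i := fun k => fun i : Fin m => k i.succ)
      (j := fun k => Fin.cons 0 k) ?_ ?_ ?_ ?_ ?_
    · intro k hk
      rw [Finset.mem_filter, mem_homogFinset] at hk
      obtain ⟨hk1, hk2⟩ := hk
      refine (mem_homogFinset _).mpr ?_
      rw [Fin.sum_univ_succ, hk2, zero_add] at hk1
      exact hk1
    · intro k hk
      rw [mem_homogFinset] at hk
      rw [Finset.mem_filter]
      refine ⟨(mem_homogFinset _).mpr ?_, by simp⟩
      rw [Fin.sum_univ_succ]
      simpa using hk
    · intro k hk
      rw [Finset.mem_filter, mem_homogFinset] at hk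
      funext i
      cases i using Fin.cases with
      | zero => simp [hk.2]
      | succ i => simp
    · intro k hk
      funext i
      simp
    · intro k hk
      rw [Finset.mem_filter, mem_homogFinset] at hk
      show ∏ i, α i ^ k i = ∏ i : Fin m, α i.succ ^ k i.succ
      rw [Fin.prod_univ_succ, hk.2, pow_zero, one_mul]

lemma cdenom_ne_zero {m : ℕ} {α : Fin m → ℂ} (hα : Function.Injective α) (j : Fin m) :
    cdenom α j ≠ 0 := by
  rw [cdenom, Finset.prod_ne_zero_iff]
  intro k hk
  have : j ≠ k := fun h => (Finset.mem_erase.mp hk).1 h.symm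
  exact sub_ne_zero_of_ne fun h => this (hα h)

lemma coeff_basis {m : ℕ} (α : Fin m → ℂ) (j : Fin m) :
    (Lagrange.basis Finset.univ α j).coeff (m - 1) = (cdenom α j)⁻¹ := by
  have hb : Lagrange.basis Finset.univ α j =
      Polynomial.C (cdenom α j)⁻¹ * Lagrange.nodal (Finset.univ.erase j) α := by
    rw [Lagrange.basis, Lagrange.nodal, cdenom]
    have e : ∏ k ∈ Finset.univ.erase j, Lagrange.basisDivisor (α j) (α k) =
        ∏ k ∈ Finset.univ.erase j,
          (Polynomial.C ((α j - α k)⁻¹) * (Polynomial.X - Polynomial.C (α k))) :=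
      Finset.prod_congr rfl fun _ _ => rfl
    rw [e, Finset.prod_mul_distrib, ← map_prod, ← Finset.prod_inv_distrib]
  rw [hb, Polynomial.coeff_C_mul]
  have hcard : ((Finset.univ : Finset (Fin m)).erase j).card = m - 1 := by
    rw [Finset.card_erase_of_mem (Finset.mem_univ j), Finset.card_univ, Fintype.card_fin]
  have hmon : (Lagrange.nodal (Finset.univ.erase j) α).Monic := Lagrange.nodal_monic
  have hdeg : (Lagrange.nodal (Finset.univ.erase j) α).natDegree = m - 1 := by
    rw [Lagrange.natDegree_nodal, hcard]
  rw [← hdeg, hmon.coeff_natDegree, mul_one]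

lemma Ssum_lt {m : ℕ} (α : Fin m → ℂ) (hα : Function.Injective α)
    (n : ℕ) (hn : n < m) : Ssum α n = if n = m - 1 then 1 else 0 := by
  have hinj : Set.InjOn α (Finset.univ : Finset (Fin m)) := Function.Injective.injOn hα
  have hdeg : (Polynomial.X ^ n : Polynomial ℂ).degree < #(Finset.univ : Finset (Fin m)) := by
    rw [Polynomial.degree_X_pow, Finset.card_univ, Fintype.card_fin]
    exact_mod_cast hn
  have h := Lagrange.eq_interpolate hinj hdeg
  have h2 := congrArg (fun p : Polynomial ℂ => p.coeff (m - 1)) h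
  simp only [Lagrange.interpolate_apply, Polynomial.finset_sum_coeff,
    Polynomial.coeff_C_mul, Polynomial.eval_pow, Polynomial.eval_X,
    Polynomial.coeff_X_pow] at h2
  rw [Ssum]
  have h3 : ∀ j : Fin m, α j ^ n / cdenom α j
      = α j ^ n * (Lagrange.basis Finset.univ α j).coeff (m - 1) := by
    intro j
    rw [coeff_basis α j, div_eq_mul_inv]
  simp only [h3]
  rw [← h2]
  by_cases hc : n = m - 1
  · rw [if_pos hc, if_pos hc.symm]
  · rw [if_neg hc, if_neg fun h => hc h.symm]

lemma Ssum_rec {m : ℕ} (α : Fin (m + 1) → ℂ) (hα : Function.Injective α) (n : ℕ) :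
    Ssum α (n + 1) = α 0 * Ssum α n + Ssum (fun i => α i.succ) n := by
  have key : ∀ i : Fin m, cdenom α i.succ =
      (α i.succ - α 0) * cdenom (fun i : Fin m => α i.succ) i := by
    intro i
    rw [cdenom, ← Finset.mul_prod_erase _ _
      (Finset.mem_erase.mpr ⟨(Fin.succ_ne_zero i).symm, Finset.mem_univ (0 : Fin (m + 1))⟩)]
    congr 1
    have hset : ((Finset.univ : Finset (Fin (m + 1))).erase i.succ).erase 0 =
        ((Finset.univ : Finset (Fin m)).erase i).map ⟨Fin.succ, Fin.succ_injective m⟩ := by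
      ext k
      cases k using Fin.cases with
      | zero => simp [Fin.succ_ne_zero]
      | succ b => simp [Fin.succ_ne_zero, Fin.succ_inj, (Fin.succ_ne_zero b)]
    rw [hset, Finset.prod_map, cdenom]
    rfl
  have tail_inj : Function.Injective (fun i : Fin m => α i.succ) :=
    fun a b h => Fin.succ_injective m (hα h)
  have hterm : ∀ i : Fin m, α i.succ ^ (n + 1) / cdenom α i.succ =
      α 0 * (α i.succ ^ n / cdenom α i.succ) +
        α i.succ ^ n / cdenom (fun i : Fin m => α i.succ) i := by
    intro i
    have h1 : α i.succ - α 0 ≠ 0 := sub_ne_zero_of_ne fun h => (Fin.succ_ne_zero i) (hα h)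
    have h2 : cdenom (fun i : Fin m => α i.succ) i ≠ 0 := cdenom_ne_zero tail_inj i
    rw [key i]
    field_simp
    ring
  rw [Ssum, Ssum, Ssum]
  rw [Fin.sum_univ_succ (f := fun j => α j ^ (n + 1) / cdenom α j),
      Fin.sum_univ_succ (f := fun j => α j ^ n / cdenom α j)]
  have hsum : ∑ i : Fin m, α i.succ ^ (n + 1) / cdenom α i.succ =
      α 0 * ∑ i : Fin m, α i.succ ^ n / cdenom α i.succ +
        ∑ i : Fin m, α i.succ ^ n / cdenom (fun i : Fin m => α i.succ) i := by
    rw [Finset.mul_sum, ← Finset.sum_add_distrib]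
    exact Finset.sum_congr rfl fun i _ => hterm i
  rw [hsum]
  ring

lemma Ssum_empty (α : Fin 0 → ℂ) (n : ℕ) : Ssum α n = 0 := by
  rw [Ssum]
  simp

/-- The key identity: `∑_j α_j^n/∏_{k≠j}(α_j-α_k) = h_{n-m+1}(α)` for `n ≥ m-1`, `0` below. -/
lemma Ssum_eq : ∀ (m : ℕ), 0 < m → ∀ (α : Fin m → ℂ), Function.Injective α → ∀ n : ℕ,
    Ssum α n = if m - 1 ≤ n then completeHomog m (n - (m - 1)) α else 0 := by
  intro m
  induction m with
  | zero => omega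
  | succ m IH =>
    intro _ α hα n
    simp only [Nat.succ_sub_one]
    rcases lt_or_ge n m with hn | hn
    · rw [Ssum_lt α hα n (by omega), Nat.succ_sub_one,
        if_neg (by omega : ¬ n = m), if_neg (by omega : ¬ m ≤ n)]
    · rw [if_pos (by omega : m ≤ n)]
      induction n, hn using Nat.le_induction with
      | base =>
        rw [Ssum_lt α hα m (by omega), Nat.succ_sub_one, if_pos rfl,
          Nat.sub_self, completeHomog_zero]
      | succ n hn IH2 =>
        have tail_inj : Function.Injective (fun i : Fin m => α i.succ) :=
          fun a b h => Fin.succ_injective m (hα h)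
        have h3 : Ssum (fun i : Fin m => α i.succ) n
            = completeHomog m (n - m + 1) (fun i : Fin m => α i.succ) := by
          rcases Nat.eq_zero_or_pos m with rfl | hm'
          · rw [Ssum_empty, Nat.sub_zero, completeHomog_zero_vars]
          · rw [IH hm' _ tail_inj n, if_pos (by omega : m - 1 ≤ n)]
            congr 1
            omega
        rw [Ssum_rec α hα n, IH2, h3]
        have e : n + 1 - m = (n - m) + 1 := by omega
        rw [e, completeHomog_rec]

/-- For pairwise distinct `α`, `g_m(x) = ∑_j e^{α_j x}/∏_{k≠j}(α_j−α_k)` has the power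
series expansion `∑_{n≥m−1} h_{n−m+1}(α) x^n/n!` (written with `n = d + m − 1`);
in particular `g_m` vanishes to order `m−1` at `0`. -/
theorem gracefulBasis_last_powerSeries (m : ℕ) (hm : 0 < m) (α : Fin m → ℂ)
    (hα : Function.Injective α) (g : ℂ → ℂ)
    (hg : g = fun x => ∑ j : Fin m,
      Complex.exp (α j * x) / ∏ k ∈ (Finset.univ : Finset (Fin m)).erase j, (α j - α k)) :
    (∀ x : ℂ, HasSum
      (fun d : ℕ => completeHomog m d α * x ^ (d + m - 1) / (Nat.factorial (d + m - 1)))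
      (g x)) ∧
    (∀ k : ℕ, k < m - 1 → iteratedDeriv k g 0 = 0) := by
  have hS : ∀ n : ℕ, Ssum α n = if m - 1 ≤ n then completeHomog m (n - (m - 1)) α else 0 :=
    Ssum_eq m hm α hα
  constructor
  · intro x
    have h1 : ∀ j : Fin m, HasSum
        (fun n : ℕ => (α j * x) ^ n / (n.factorial : ℂ) / cdenom α j)
        (Complex.exp (α j * x) / cdenom α j) := by
      intro j
      have := NormedSpace.expSeries_div_hasSum_exp (α j * x)
      rw [← Complex.exp_eq_exp_ℂ] at this
      exact this.div_const _
    have h2 : HasSum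
        (fun n : ℕ => ∑ j : Fin m, (α j * x) ^ n / (n.factorial : ℂ) / cdenom α j) (g x) := by
      rw [hg]
      exact hasSum_sum fun j _ => h1 j
    have h3 : HasSum (fun n : ℕ => Ssum α n * x ^ n / (n.factorial : ℂ)) (g x) := by
      refine HasSum.congr_fun h2 ?_
      intro n
      rw [Ssum, Finset.sum_mul, Finset.sum_div]
      refine Finset.sum_congr rfl fun j _ => ?_
      rw [mul_pow]
      ring
    have h4 : ∑ i ∈ Finset.range (m - 1), Ssum α i * x ^ i / (i.factorial : ℂ) = 0 := by
      refine Finset.sum_eq_zero fun i hi => ?_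
      rw [hS i, if_neg (by rw [Finset.mem_range] at hi; omega), zero_mul, zero_div]
    have h5 := (hasSum_nat_add_iff'
      (f := fun n : ℕ => Ssum α n * x ^ n / (n.factorial : ℂ)) (m - 1)).mpr h3
    rw [h4, sub_zero] at h5
    refine HasSum.congr_fun h5 ?_
    intro d
    have e : d + m - 1 = d + (m - 1) := by omega
    rw [e, hS, if_pos (by omega : m - 1 ≤ d + (m - 1)),
      show d + (m - 1) - (m - 1) = d by omega]
  · have hd : ∀ k : ℕ, iteratedDeriv k g
        = fun x => ∑ j, α j ^ k * Complex.exp (α j * x) / cdenom α j := by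
      intro k
      induction k with
      | zero =>
        rw [iteratedDeriv_zero, hg]
        funext x
        exact Finset.sum_congr rfl fun j _ => by rw [pow_zero, one_mul]; rfl
      | succ k ih =>
        rw [iteratedDeriv_succ, ih]
        funext x
        have hder : ∀ j ∈ Finset.univ,
            HasDerivAt (fun x => α j ^ k * Complex.exp (α j * x) / cdenom α j)
              (α j ^ (k + 1) * Complex.exp (α j * x) / cdenom α j) x := by
          intro j _
          have hinner : HasDerivAt (fun x : ℂ => α j * x) (α j) x := by
            simpa using (hasDerivAt_id x).const_mul (α j)
          have h2 : HasDerivAt (fun x : ℂ => Complex.exp (α j * x))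
              (Complex.exp (α j * x) * α j) x := hinner.cexp
          have h3 := (h2.const_mul (α j ^ k)).div_const (cdenom α j)
          refine h3.congr_deriv ?_
          ring
        exact (HasDerivAt.fun_sum hder).deriv
    intro k hk
    rw [hd k]
    have : ∑ j, α j ^ k * Complex.exp (α j * 0) / cdenom α j = Ssum α k := by
      rw [Ssum]
      refine Finset.sum_congr rfl fun j _ => ?_
      rw [mul_zero, Complex.exp_zero, mul_one]
    show ∑ j, α j ^ k * Complex.exp (α j * 0) / cdenom α j = 0
    rw [this, hS, if_neg (by omega)]
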